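/- Let X be a separable infinite-dimensional Fréchet space over 𝕂 (𝕂 = ℝ or ℂ) that admits a continuous norm. Then X is a G-space: for any two countable dense linearly independent subsets A and B of X there exists a continuous linear automorphism J of X (J invertible with continuous inverse) such that J(A) = B. -/

import Mathlib

set_option linter.unusedSectionVars false
set_option linter.unnecessarySeqFocus false
set_option maxHeartbeats 1000000

noncomputable section
open Filter Topology Set
namespace GS



lemma one_le_prod_real (s : Finset ℕ) (f : ℕ → ℝ) (h : ∀ i ∈ s, 1 ≤ f i) :
    1 ≤ ∏ i ∈ s, f i := by
  classical
  induction s using Finset.induction with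
  | empty => simp
  | @insert a s ha ih =>
    rw [Finset.prod_insert ha]
    have h1 := h a (Finset.mem_insert_self a s)
    have h2 : 1 ≤ ∏ i ∈ s, f i := ih (fun i hi => h i (Finset.mem_insert_of_mem hi))
    nlinarith

lemma prod_Ico_bound : ∀ a m : ℕ, a ≤ m →
    (∏ k ∈ Finset.Ico a m, (1 + (2:ℝ)⁻¹ ^ k / 8)) ≤ 2 - (2:ℝ)⁻¹ ^ m := by
  intro a m h
  induction m, h using Nat.le_induction with
  | base =>
    rw [Finset.Ico_self, Finset.prod_empty]
    have : (2:ℝ)⁻¹ ^ a ≤ 1 := pow_le_one₀ (by norm_num) (by norm_num)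
    linarith
  | succ m hm ih =>
    rw [Finset.prod_Ico_succ_top hm]
    have h1 : (0:ℝ) < (2:ℝ)⁻¹ ^ m := by positivity
    have h2 : (2:ℝ)⁻¹ ^ m ≤ 1 := pow_le_one₀ (by norm_num) (by norm_num)
    have h3 : (2:ℝ)⁻¹ ^ (m+1) = (2:ℝ)⁻¹ ^ m * 2⁻¹ := pow_succ _ _
    nlinarith [ih]

lemma prod_bound (t : ℕ → ℝ) (h0 : ∀ k, 0 ≤ t k) (n : ℕ)
    (hs : ∀ k, n ≤ k → t k ≤ (2:ℝ)⁻¹ ^ k / 8) :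
    ∀ m, (∏ k ∈ Finset.range m, (1 + t k)) ≤ (∏ k ∈ Finset.range n, (1 + t k)) * 2 := by
  intro m
  have hone : ∀ k : ℕ, (1:ℝ) ≤ 1 + t k := fun k => by linarith [h0 k]
  have honeprod : (1:ℝ) ≤ ∏ k ∈ Finset.range n, (1 + t k) :=
    one_le_prod_real _ _ (fun i _ => hone i)
  rcases le_total m n with h | h
  · have h1 : (∏ k ∈ Finset.range m, (1 + t k)) ≤ ∏ k ∈ Finset.range n, (1 + t k) := by
      rw [← Finset.prod_range_mul_prod_Ico (fun k => (1:ℝ) + t k) h]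
      have h2 : (1:ℝ) ≤ ∏ k ∈ Finset.Ico m n, (1 + t k) :=
        one_le_prod_real _ _ (fun i _ => hone i)
      nlinarith [one_le_prod_real (Finset.range m) _ (fun i (_ : i ∈ Finset.range m) => hone i)]
    nlinarith
  · rw [← Finset.prod_range_mul_prod_Ico _ h]
    have h1 : (∏ k ∈ Finset.Ico n m, (1 + t k)) ≤
        ∏ k ∈ Finset.Ico n m, (1 + (2:ℝ)⁻¹ ^ k / 8) :=
      Finset.prod_le_prod (fun i _ => by linarith [h0 i])
        (fun i hi => by
          have := hs i (Finset.mem_Ico.1 hi).1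
          linarith)
    have h2 := prod_Ico_bound n m h
    have h3 : (0:ℝ) < (2:ℝ)⁻¹ ^ m := by positivity
    nlinarith


variable {𝕜 : Type*} [RCLike 𝕜] {X : Type*} [AddCommGroup X] [Module 𝕜 X]

section Algebraic



/-- Hahn-Banach: a functional bounded by the norm `N`, vanishing on a finite set and
taking value 1 at a point outside its span. -/
lemma exists_functional (N : Seminorm 𝕜 X) (hN : ∀ x : X, N x = 0 → x = 0)
    (S : Finset X) (x : X) (hx : x ∉ Submodule.span 𝕜 (S : Set X)) :
    ∃ (f : X →ₗ[𝕜] 𝕜) (c : ℝ), 1 ≤ c ∧ (∀ u, ‖f u‖ ≤ c * N u) ∧ f x = 1 ∧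
      ∀ s ∈ S, f s = 0 := by
  letI : NormedAddCommGroup X := AddGroupNorm.toNormedAddCommGroup
    { toFun := fun z => N z
      map_zero' := map_zero N
      add_le' := fun a b => map_add_le_add N a b
      neg' := fun a => map_neg_eq_map N a
      eq_zero_of_map_eq_zero' := fun a ha => hN a ha }
  letI : NormedSpace 𝕜 X := ⟨fun k z => by
    change N (k • z) ≤ ‖k‖ * N z
    rw [map_smul_eq_mul]⟩
  have hnorm_eq : ∀ z : X, ‖z‖ = N z := fun _ => rfl
  set W := Submodule.span 𝕜 (S : Set X) with hW
  haveI : FiniteDimensional 𝕜 W := FiniteDimensional.span_of_finite 𝕜 S.finite_toSet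
  haveI : IsClosed (W : Set X) := W.closed_of_finiteDimensional
  have hxq : (Submodule.Quotient.mk x : X ⧸ W) ≠ 0 := by
    simpa [Submodule.Quotient.mk_eq_zero] using hx
  obtain ⟨g, hg1, hgx⟩ := exists_dual_vector 𝕜 (Submodule.Quotient.mk x : X ⧸ W) (norm_ne_zero_iff.mpr hxq)
  let mkL : X →L[𝕜] X ⧸ W := W.mkQ.mkContinuous 1
    (fun z => by simpa using Submodule.Quotient.norm_mk_le W z)
  have hnx : ‖(Submodule.Quotient.mk x : X ⧸ W)‖ ≠ 0 := norm_ne_zero_iff.mpr hxq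
  set r : ℝ := ‖(Submodule.Quotient.mk x : X ⧸ W)‖ with hr
  let F : X →L[𝕜] 𝕜 := ((r⁻¹ : ℝ) : 𝕜) • (g.comp mkL)
  refine ⟨F.toLinearMap, max r⁻¹ 1, le_max_right _ _, ?_, ?_, ?_⟩
  · intro u
    have hrpos : (0:ℝ) < r := lt_of_le_of_ne (norm_nonneg _) (Ne.symm hnx)
    have h1 : ‖F u‖ ≤ r⁻¹ * ‖mkL u‖ := by
      have e1 : ‖F u‖ = r⁻¹ * ‖g (mkL u)‖ := by
        have e0 : F u = ((r⁻¹ : ℝ) : 𝕜) * g (mkL u) := rfl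
        rw [e0, norm_mul, RCLike.norm_ofReal, abs_of_nonneg (by positivity)]
      rw [e1]
      have h2 : ‖g (mkL u)‖ ≤ ‖mkL u‖ := by
        simpa [hg1] using g.le_opNorm (mkL u)
      exact mul_le_mul_of_nonneg_left h2 (by positivity)
    have h2 : ‖mkL u‖ ≤ ‖u‖ := by exact Submodule.Quotient.norm_mk_le W u
    have h3 : (0:ℝ) ≤ r⁻¹ := by positivity
    calc ‖F u‖ ≤ r⁻¹ * ‖u‖ := h1.trans (by gcongr)
      _ ≤ max r⁻¹ 1 * N u := by
          rw [hnorm_eq] at *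
          gcongr
          exact le_max_left _ _
  · show ((r⁻¹ : ℝ) : 𝕜) * g (mkL x) = 1
    have : mkL x = Submodule.Quotient.mk x := rfl
    rw [this, hgx, ← RCLike.ofReal_mul, inv_mul_cancel₀ hnx, RCLike.ofReal_one]
  · intro s hs
    show ((r⁻¹ : ℝ) : 𝕜) * g (mkL s) = 0
    have : mkL s = 0 := by
      show (Submodule.Quotient.mk s : X ⧸ W) = 0
      rw [Submodule.Quotient.mk_eq_zero]
      exact Submodule.subset_span hs
    rw [this, map_zero, mul_zero]


end Algebraic

section Uniform
variable [UniformSpace X] [IsUniformAddGroup X] [ContinuousSMul 𝕜 X]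




private lemma one_add_ne (f : X →L[𝕜] 𝕜) (v : X) (h : ‖f v‖ < 1) : (1 : 𝕜) + f v ≠ 0 := by
  intro hc
  have : f v = -1 := by linear_combination hc
  rw [this] at h
  simp at h

/-- The rank one perturbation `x ↦ x + f x • v` as a continuous linear equivalence,
when `‖f v‖ < 1`. -/
def rankOne (f : X →L[𝕜] 𝕜) (v : X) : X ≃L[𝕜] X :=
  if h : ‖f v‖ < 1 then
    { toLinearEquiv := LinearEquiv.ofLinear
        (LinearMap.id + (f : X →ₗ[𝕜] 𝕜).smulRight v)
        (LinearMap.id - (((1 + f v)⁻¹) • (f : X →ₗ[𝕜] 𝕜)).smulRight v)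
        (by
          have h0 := one_add_ne f v h
          ext x
          simp only [LinearMap.coe_comp, Function.comp_apply, LinearMap.add_apply,
            LinearMap.sub_apply, LinearMap.id_apply, LinearMap.smulRight_apply,
            LinearMap.smul_apply, LinearMap.coe_coe, smul_eq_mul, map_sub, map_smul,
            LinearMap.id_coe, id_eq]
          match_scalars <;> field_simp <;> ring)
        (by
          have h0 := one_add_ne f v h
          ext x
          simp only [LinearMap.coe_comp, Function.comp_apply, LinearMap.add_apply,
            LinearMap.sub_apply, LinearMap.id_apply, LinearMap.smulRight_apply,
            LinearMap.smul_apply, LinearMap.coe_coe, smul_eq_mul, map_add, map_smul,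
            LinearMap.id_coe, id_eq]
          match_scalars <;> field_simp <;> ring)
      continuous_toFun := by
        exact continuous_id.add ((f.continuous).smul continuous_const)
      continuous_invFun := by
        refine continuous_id.sub (Continuous.smul ?_ continuous_const)
        exact continuous_const.mul f.continuous }
  else ContinuousLinearEquiv.refl 𝕜 X

lemma rankOne_apply (f : X →L[𝕜] 𝕜) (v : X) (h : ‖f v‖ < 1) (x : X) :
    rankOne f v x = x + f x • v := by
  rw [rankOne, dif_pos h]
  rfl

lemma rankOne_symm_apply (f : X →L[𝕜] 𝕜) (v : X) (h : ‖f v‖ < 1) (x : X) :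
    (rankOne f v).symm x = x + (-((1 + f v)⁻¹ * f x)) • v := by
  rw [rankOne, dif_pos h]
  show x - ((((1 + f v)⁻¹) • (f : X →ₗ[𝕜] 𝕜)) x) • v = _
  simp only [LinearMap.smul_apply, LinearMap.coe_coe, smul_eq_mul, neg_smul, sub_eq_add_neg,
    smul_smul]
  rfl





lemma cont_of_dominated (N : Seminorm 𝕜 X) (hNc : Continuous N) (f : X →ₗ[𝕜] 𝕜) (c : ℝ)
    (h : ∀ u, ‖f u‖ ≤ c * N u) : Continuous f := by
  apply continuous_of_continuousAt_zero f
  rw [ContinuousAt, map_zero]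
  have hN0 : Tendsto (fun x : X => c * N x) (𝓝 0) (𝓝 0) := by
    have := (hNc.tendsto 0).const_mul c
    simpa using this
  have : Tendsto (fun x : X => f x) (𝓝 0) (𝓝 0) :=
    tendsto_zero_iff_norm_tendsto_zero.mpr (squeeze_zero (fun t => norm_nonneg _) h hN0)
  exact this

lemma dense_avoid [T2Space X] (hinf : ¬ FiniteDimensional 𝕜 X)
    {D : Set X} (hD : Dense D) {U : Set X} (hU : IsOpen U) (hne : U.Nonempty)
    (W : Submodule 𝕜 X) [FiniteDimensional 𝕜 W] :
    ∃ z ∈ D, z ∈ U ∧ z ∉ W := by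
  have hWc : IsClosed (W : Set X) := W.closed_of_finiteDimensional
  have h2 : (U \ W).Nonempty := by
    by_contra h
    rw [Set.not_nonempty_iff_eq_empty, Set.diff_eq_empty] at h
    have h3 : (interior (W : Set X)).Nonempty :=
      ⟨hne.some, interior_maximal h hU hne.some_mem⟩
    have h4 : W = ⊤ := Submodule.eq_top_of_nonempty_interior' W h3
    apply hinf
    have : FiniteDimensional 𝕜 (⊤ : Submodule 𝕜 X) := h4 ▸ ‹FiniteDimensional 𝕜 W›
    exact Module.Finite.equiv (Submodule.topEquiv)
  obtain ⟨z, hz1, hz2⟩ := hD.exists_mem_open (hU.sdiff hWc) h2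
  exact ⟨z, hz1, hz2.1, hz2.2⟩

lemma eq_zero_of_tail (r C : ℝ) (n₀ : ℕ) (hr : 0 ≤ r)
    (h : ∀ m, n₀ ≤ m → r ≤ (2:ℝ)⁻¹ ^ m * C) : r = 0 := by
  have h2 : Tendsto (fun m : ℕ => (2:ℝ)⁻¹ ^ m * C) atTop (𝓝 (0 * C)) :=
    (tendsto_pow_atTop_nhds_zero_of_lt_one (by norm_num) (by norm_num)).mul_const C
  rw [zero_mul] at h2
  have h3 : r ≤ 0 := ge_of_tendsto h2 (eventually_atTop.2 ⟨n₀, h⟩)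
  linarith

variable (p : ℕ → Seminorm 𝕜 X)

lemma cauchySeq_of_pbasis
    (hbasis : ∀ U ∈ 𝓝 (0 : X), ∃ n ε, 0 < ε ∧ {x | p n x < ε} ⊆ U) (u : ℕ → X)
    (h : ∀ n (ε : ℝ), 0 < ε → ∃ M, ∀ i j, M ≤ i → M ≤ j → p n (u i - u j) < ε) :
    CauchySeq u := by
  rw [cauchySeq_iff]
  intro V hV
  rw [uniformity_eq_comap_nhds_zero X] at hV
  obtain ⟨W, hW, hWV⟩ := Filter.mem_comap.mp hV
  obtain ⟨n, ε, hε, hsub⟩ := hbasis W hW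
  obtain ⟨M, hM⟩ := h n ε hε
  refine ⟨M, fun k hk l hl => ?_⟩
  apply hWV
  have : u l - u k ∈ W := hsub (hM l k hl hk)
  simpa using this

lemma tendsto_of_pbasis
    (hbasis : ∀ U ∈ 𝓝 (0 : X), ∃ n ε, 0 < ε ∧ {x | p n x < ε} ⊆ U) (u : ℕ → X) (x : X)
    (h : ∀ n (ε : ℝ), 0 < ε → ∃ M, ∀ i, M ≤ i → p n (u i - x) < ε) :
    Tendsto u atTop (𝓝 x) := by
  rw [← tendsto_sub_nhds_zero_iff]
  intro V hV
  obtain ⟨n, ε, hε, hsub⟩ := hbasis V hV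
  obtain ⟨M, hM⟩ := h n ε hε
  rw [Filter.mem_map]
  filter_upwards [Filter.eventually_ge_atTop M] with i hi
  exact hsub (hM i hi)

lemma exists_limit [CompleteSpace X] [T2Space X]
    (hbasis : ∀ U ∈ 𝓝 (0 : X), ∃ n ε, 0 < ε ∧ {x | p n x < ε} ⊆ U)
    (hpc : ∀ n, Continuous ⇑(p n))
    (T : ℕ → X →ₗ[𝕜] X)
    (hdiff : ∀ n, ∃ E, 0 ≤ E ∧ ∀ m x, n ≤ m →
      p n (T (m+1) x - T m x) ≤ (2:ℝ)⁻¹ ^ m * (E * p 0 x)) :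
    ∃ L : X →ₗ[𝕜] X, ∀ n, ∃ E, 0 ≤ E ∧ ∀ m x, n ≤ m →
      p n (L x - T m x) ≤ (2:ℝ)⁻¹ ^ m * (E * p 0 x) := by
  -- telescoping estimate
  have tele : ∀ n E, 0 ≤ E → (∀ m x, n ≤ m →
      p n (T (m+1) x - T m x) ≤ (2:ℝ)⁻¹ ^ m * (E * p 0 x)) →
      ∀ x j, n ≤ j → ∀ i, j ≤ i →
      p n (T i x - T j x) ≤ ((2:ℝ)⁻¹ ^ j * 2 - (2:ℝ)⁻¹ ^ i * 2) * (E * p 0 x) := by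
    intro n E hE hEb x j hj i hi
    induction i, hi using Nat.le_induction with
    | base => simp
    | succ i hii ih =>
      have h1 : T (i+1) x - T j x = (T (i+1) x - T i x) + (T i x - T j x) := by abel
      have h2 : p n (T (i+1) x - T j x) ≤
          p n (T (i+1) x - T i x) + p n (T i x - T j x) := by
        rw [h1]; exact map_add_le_add _ _ _
      have h3 := hEb i x (le_trans hj hii)
      have h4 : (2:ℝ)⁻¹ ^ (i+1) = (2:ℝ)⁻¹ ^ i * 2⁻¹ := pow_succ _ _
      have h5 : (0:ℝ) ≤ E * p 0 x := mul_nonneg hE (apply_nonneg _ _)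
      nlinarith [ih, h2, h3]
  have key : ∀ x, ∃ y : X, Tendsto (fun m => T m x) atTop (𝓝 y) := by
    intro x
    apply cauchySeq_tendsto_of_complete
    apply cauchySeq_of_pbasis p hbasis
    intro n ε hε
    obtain ⟨E, hE, hEb⟩ := hdiff n
    set C : ℝ := 2 * (E * p 0 x) with hC
    have hC0 : 0 ≤ C := by positivity
    have hev : ∀ᶠ M in atTop, ((2:ℝ)⁻¹ ^ M * C < ε ∧ n ≤ M) := by
      have h2 : Tendsto (fun M : ℕ => (2:ℝ)⁻¹ ^ M * C) atTop (𝓝 (0 * C)) :=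
        (tendsto_pow_atTop_nhds_zero_of_lt_one (by norm_num) (by norm_num)).mul_const C
      rw [zero_mul] at h2
      exact (h2.eventually_lt_const hε).and (Filter.eventually_ge_atTop n)
    obtain ⟨M, hM1, hM2⟩ := hev.exists
    refine ⟨M, fun i j hi hj => ?_⟩
    rcases le_total j i with hji | hij
    · have := tele n E hE hEb x j (le_trans hM2 hj) i hji
      have hb : ((2:ℝ)⁻¹ ^ j * 2 - (2:ℝ)⁻¹ ^ i * 2) * (E * p 0 x) ≤ (2:ℝ)⁻¹ ^ M * C := by
        have hpow : (2:ℝ)⁻¹ ^ j ≤ (2:ℝ)⁻¹ ^ M := pow_le_pow_of_le_one (by norm_num) (by norm_num) hj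
        have hpow2 : (0:ℝ) ≤ (2:ℝ)⁻¹ ^ i := by positivity
        have h5 : (0:ℝ) ≤ E * p 0 x := mul_nonneg hE (apply_nonneg _ _)
        rw [hC]; nlinarith
      calc p n (T i x - T j x) ≤ _ := this
        _ ≤ (2:ℝ)⁻¹ ^ M * C := hb
        _ < ε := hM1
    · have := tele n E hE hEb x i (le_trans hM2 hi) j hij
      have hb : ((2:ℝ)⁻¹ ^ i * 2 - (2:ℝ)⁻¹ ^ j * 2) * (E * p 0 x) ≤ (2:ℝ)⁻¹ ^ M * C := by
        have hpow : (2:ℝ)⁻¹ ^ i ≤ (2:ℝ)⁻¹ ^ M := pow_le_pow_of_le_one (by norm_num) (by norm_num) hi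
        have hpow2 : (0:ℝ) ≤ (2:ℝ)⁻¹ ^ j := by positivity
        have h5 : (0:ℝ) ≤ E * p 0 x := mul_nonneg hE (apply_nonneg _ _)
        rw [hC]; nlinarith
      rw [map_sub_rev]
      calc p n (T j x - T i x) ≤ _ := this
        _ ≤ (2:ℝ)⁻¹ ^ M * C := hb
        _ < ε := hM1
  choose L0 hL0 using key
  have hadd : ∀ x y, L0 (x + y) = L0 x + L0 y := by
    intro x y
    have h1 := (hL0 x).add (hL0 y)
    have h2 : (fun m => T m x + T m y) = fun m => T m (x + y) := by
      funext m; rw [map_add]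
    rw [h2] at h1
    exact tendsto_nhds_unique (hL0 (x+y)) h1
  have hsmul : ∀ (k : 𝕜) x, L0 (k • x) = k • L0 x := by
    intro k x
    have h1 := (hL0 x).const_smul k
    have h2 : (fun m => k • T m x) = fun m => T m (k • x) := by
      funext m; rw [map_smul]
    rw [h2] at h1
    exact tendsto_nhds_unique (hL0 (k • x)) h1
  refine ⟨⟨⟨L0, hadd⟩, hsmul⟩, ?_⟩
  intro n
  obtain ⟨E, hE, hEb⟩ := hdiff n
  refine ⟨2 * E, by positivity, fun m x hm => ?_⟩
  have h1 : Tendsto (fun i => p n (T i x - T m x)) atTop (𝓝 (p n (L0 x - T m x))) := by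
    have h2 : Tendsto (fun i => T i x - T m x) atTop (𝓝 (L0 x - T m x)) :=
      (hL0 x).sub_const _
    exact ((hpc n).tendsto _).comp h2
  apply le_of_tendsto h1
  filter_upwards [Filter.eventually_ge_atTop m] with i hi
  have := tele n E hE hEb x m hm i hi
  have hpow2 : (0:ℝ) ≤ (2:ℝ)⁻¹ ^ i * 2 := by positivity
  have h5 : (0:ℝ) ≤ E * p 0 x := mul_nonneg hE (apply_nonneg _ _)
  nlinarith

lemma continuous_of_bounds
    (hbasis : ∀ U ∈ 𝓝 (0 : X), ∃ n ε, 0 < ε ∧ {x | p n x < ε} ⊆ U)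
    (hpc : ∀ n, Continuous ⇑(p n))
    (L : X →ₗ[𝕜] X) (h : ∀ n, ∃ C, 0 ≤ C ∧ ∀ x, p n (L x) ≤ C * p n x) :
    Continuous L := by
  apply continuous_of_continuousAt_zero L
  rw [ContinuousAt, map_zero]
  intro U hU
  obtain ⟨n, ε, hε, hsub⟩ := hbasis U hU
  obtain ⟨C, hC, hCb⟩ := h n
  rw [Filter.mem_map]
  have hopen : IsOpen {x : X | p n x < ε / (C + 1)} := isOpen_lt (hpc n) continuous_const
  have hmem : (0:X) ∈ {x : X | p n x < ε / (C + 1)} := by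
    simp only [Set.mem_setOf_eq, map_zero]
    positivity
  apply Filter.mem_of_superset (hopen.mem_nhds hmem)
  intro x hx
  apply hsub
  simp only [Set.mem_setOf_eq] at hx ⊢
  calc p n (L x) ≤ C * p n x := hCb x
    _ ≤ (C + 1) * p n x := by nlinarith [apply_nonneg (p n) x]
    _ < (C + 1) * (ε / (C + 1)) := by
        apply mul_lt_mul_of_pos_left hx; linarith
    _ = ε := by field_simp


structure Pack (𝕜 X : Type*) [RCLike 𝕜] [AddCommGroup X] [Module 𝕜 X] [UniformSpace X]
    [IsUniformAddGroup X] [ContinuousSMul 𝕜 X] where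
  f : X →L[𝕜] 𝕜
  v : X
  c : ℝ
  a : X
  b : X
  e : X ≃L[𝕜] X

def Jc (s : ℕ → Pack 𝕜 X) : ℕ → X ≃L[𝕜] X
  | 0 => ContinuousLinearEquiv.refl 𝕜 X
  | m + 1 => (Jc s m).trans (s m).e

/-- The boundedness conditions on the step data. -/
def GoodPack (p : ℕ → Seminorm 𝕜 X) (j : ℕ) (d : Pack 𝕜 X) : Prop :=
  0 ≤ d.c ∧ (∀ u, ‖d.f u‖ ≤ d.c * p 0 u) ∧
  (∀ n, n ≤ j → d.c * p n d.v ≤ (2:ℝ)⁻¹ ^ j / 16) ∧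
  ‖d.f d.v‖ ≤ 1/2 ∧ (∀ x, d.e x = x + d.f x • d.v)

lemma one_add_ne' (z : 𝕜) (h : ‖z‖ ≤ 1/2) : (1 : 𝕜) + z ≠ 0 := by
  intro hc
  have : z = -1 := by linear_combination hc
  rw [this] at h
  norm_num at h

lemma norm_one_add_ge (z : 𝕜) (h : ‖z‖ ≤ 1/2) : 1/2 ≤ ‖1 + z‖ := by
  have h1 : ‖(1:𝕜)‖ - ‖-z‖ ≤ ‖1 - -z‖ := norm_sub_norm_le _ _
  rw [sub_neg_eq_add] at h1
  rw [norm_one, norm_neg] at h1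
  linarith

lemma norm_inv_one_add_le (z : 𝕜) (h : ‖z‖ ≤ 1/2) : ‖(1 + z)⁻¹‖ ≤ 2 := by
  rw [norm_inv]
  have h2 := norm_one_add_ge z h
  rw [inv_le_comm₀ (by linarith) (by norm_num)]
  linarith

lemma symm_apply_of_good (f : X →L[𝕜] 𝕜) (v : X) (e : X ≃L[𝕜] X)
    (hfv : ‖f v‖ ≤ 1/2) (he : ∀ x, e x = x + f x • v) (x : X) :
    e.symm x = x + (-((1 + f v)⁻¹ * f x)) • v := by
  have h0 : (1 : 𝕜) + f v ≠ 0 := one_add_ne' _ hfv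
  rw [ContinuousLinearEquiv.symm_apply_eq, he]
  simp only [map_add, map_smul, map_neg, smul_eq_mul]
  match_scalars <;> field_simp <;> ring

variable (p : ℕ → Seminorm 𝕜 X)

lemma growth_J (hmono : ∀ m n : ℕ, m ≤ n → ∀ x, p m x ≤ p n x) (s : ℕ → Pack 𝕜 X)
    (hgood : ∀ j, GoodPack p j (s j)) (n : ℕ) :
    ∃ C, 0 ≤ C ∧ ∀ m x, p n (Jc s m x) ≤ C * p n x := by
  set t : ℕ → ℝ := fun k => (s k).c * p n ((s k).v) with ht
  have h0 : ∀ k, 0 ≤ t k := fun k => mul_nonneg (hgood k).1 (apply_nonneg _ _)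
  have hone : ∀ k : ℕ, (1:ℝ) ≤ 1 + t k := fun k => by linarith [h0 k]
  have hstep : ∀ m x, p n (Jc s m x) ≤ (∏ k ∈ Finset.range m, (1 + t k)) * p n x := by
    intro m
    induction m with
    | zero => intro x; simp [Jc]
    | succ m ih =>
      intro x
      have he : Jc s (m+1) x = Jc s m x + (s m).f (Jc s m x) • (s m).v := by
        show (s m).e (Jc s m x) = _
        exact ((hgood m).2.2.2.2) _
      have h1 : p n (Jc s (m+1) x) ≤ p n (Jc s m x) + ‖(s m).f (Jc s m x)‖ * p n ((s m).v) := by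
        rw [he]
        refine le_trans (map_add_le_add _ _ _) ?_
        rw [map_smul_eq_mul]
      have h2 : ‖(s m).f (Jc s m x)‖ ≤ (s m).c * p 0 (Jc s m x) := (hgood m).2.1 _
      have h3 : p 0 (Jc s m x) ≤ p n (Jc s m x) := hmono 0 n (Nat.zero_le n) _
      have h4 : p n (Jc s m x) ≤ (∏ k ∈ Finset.range m, (1 + t k)) * p n x := ih x
      have hv0 : 0 ≤ p n ((s m).v) := apply_nonneg _ _
      have hc0 : 0 ≤ (s m).c := (hgood m).1
      have hj0 : 0 ≤ p n (Jc s m x) := apply_nonneg _ _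
      have h5 : p n (Jc s (m+1) x) ≤ (1 + t m) * p n (Jc s m x) := by
        have hf5 : ‖(s m).f (Jc s m x)‖ * p n ((s m).v) ≤
            ((s m).c * p n (Jc s m x)) * p n ((s m).v) := by
          apply mul_le_mul_of_nonneg_right _ hv0
          exact le_trans h2 (mul_le_mul_of_nonneg_left h3 hc0)
        have ht' : t m = (s m).c * p n ((s m).v) := rfl
        nlinarith [h1, hf5]
      rw [Finset.prod_range_succ]
      have hprodpos : (0:ℝ) ≤ ∏ k ∈ Finset.range m, (1 + t k) :=
        le_trans zero_le_one (one_le_prod_real _ _ (fun i _ => hone i))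
      have hx0 : 0 ≤ p n x := apply_nonneg _ _
      nlinarith [h5, mul_le_mul_of_nonneg_left h4 (le_trans zero_le_one (hone m))]
  refine ⟨(∏ k ∈ Finset.range n, (1 + t k)) * 2, ?_, ?_⟩
  · have := one_le_prod_real (Finset.range n) _ (fun i _ => hone i)
    linarith
  · intro m x
    have hb := prod_bound t h0 n (fun k hk => by
      have h16 := (hgood k).2.2.1 n hk
      have hp8 : (0:ℝ) ≤ (2:ℝ)⁻¹ ^ k := by positivity
      have ht' : t k = (s k).c * p n ((s k).v) := rfl
      linarith) m
    have hx0 : 0 ≤ p n x := apply_nonneg _ _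
    calc p n (Jc s m x) ≤ (∏ k ∈ Finset.range m, (1 + t k)) * p n x := hstep m x
      _ ≤ (∏ k ∈ Finset.range n, (1 + t k)) * 2 * p n x := by nlinarith

lemma growth_K (hmono : ∀ m n : ℕ, m ≤ n → ∀ x, p m x ≤ p n x) (s : ℕ → Pack 𝕜 X)
    (hgood : ∀ j, GoodPack p j (s j)) (n : ℕ) :
    ∃ C, 0 ≤ C ∧ ∀ m x, p n ((Jc s m).symm x) ≤ C * p n x := by
  set t : ℕ → ℝ := fun k => 2 * (s k).c * p n ((s k).v) with ht
  have h0 : ∀ k, 0 ≤ t k := fun k => by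
    have := mul_nonneg (hgood k).1 (apply_nonneg (p n) ((s k).v))
    simp only [ht]; nlinarith
  have hone : ∀ k : ℕ, (1:ℝ) ≤ 1 + t k := fun k => by linarith [h0 k]
  have hstep : ∀ m x, p n ((Jc s m).symm x) ≤ (∏ k ∈ Finset.range m, (1 + t k)) * p n x := by
    intro m
    induction m with
    | zero => intro x; simp [Jc]
    | succ m ih =>
      intro x
      have hrec : (Jc s (m+1)).symm x = (Jc s m).symm ((s m).e.symm x) := rfl
      have hsymm := symm_apply_of_good (s m).f (s m).v (s m).e (hgood m).2.2.2.1
        ((hgood m).2.2.2.2) x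
      have hcoef : ‖-((1 + (s m).f ((s m).v))⁻¹ * (s m).f x)‖ ≤ 2 * ((s m).c * p 0 x) := by
        rw [norm_neg, norm_mul]
        have h1 := norm_inv_one_add_le ((s m).f ((s m).v)) (hgood m).2.2.2.1
        have h2 := (hgood m).2.1 x
        have h3 : 0 ≤ ‖(s m).f x‖ := norm_nonneg _
        nlinarith
      have h1 : p n ((s m).e.symm x) ≤ p n x + 2 * ((s m).c * p 0 x) * p n ((s m).v) := by
        rw [hsymm]
        refine le_trans (map_add_le_add _ _ _) ?_
        rw [map_smul_eq_mul]
        have hv0 : 0 ≤ p n ((s m).v) := apply_nonneg _ _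
        nlinarith [hcoef]
      have h2 : p n ((s m).e.symm x) ≤ (1 + t m) * p n x := by
        have h3 : p 0 x ≤ p n x := hmono 0 n (Nat.zero_le n) _
        have hv0 : 0 ≤ p n ((s m).v) := apply_nonneg _ _
        have hc0 : 0 ≤ (s m).c := (hgood m).1
        have hx0 : 0 ≤ p n x := apply_nonneg _ _
        have hx00 : 0 ≤ p 0 x := apply_nonneg _ _
        have ht' : t m = 2 * (s m).c * p n ((s m).v) := rfl
        have hf5 : (2 * (s m).c * p n ((s m).v)) * p 0 x ≤
            (2 * (s m).c * p n ((s m).v)) * p n x :=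
          mul_le_mul_of_nonneg_left h3 (by positivity)
        nlinarith [h1]
      rw [hrec, Finset.prod_range_succ]
      have h4 := ih ((s m).e.symm x)
      have hprodpos : (0:ℝ) ≤ ∏ k ∈ Finset.range m, (1 + t k) :=
        le_trans zero_le_one (one_le_prod_real _ _ (fun i _ => hone i))
      have he0 : 0 ≤ p n ((s m).e.symm x) := apply_nonneg _ _
      nlinarith [h4, mul_le_mul_of_nonneg_left h2 hprodpos]
  refine ⟨(∏ k ∈ Finset.range n, (1 + t k)) * 2, ?_, ?_⟩
  · have := one_le_prod_real (Finset.range n) _ (fun i _ => hone i)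
    linarith
  · intro m x
    have hb := prod_bound t h0 n (fun k hk => by
      have h16 := (hgood k).2.2.1 n hk
      have hp : (0:ℝ) ≤ (2:ℝ)⁻¹ ^ k := by positivity
      have ht' : t k = 2 * (s k).c * p n ((s k).v) := rfl
      nlinarith) m
    have hx0 : 0 ≤ p n x := apply_nonneg _ _
    calc p n ((Jc s m).symm x) ≤ (∏ k ∈ Finset.range m, (1 + t k)) * p n x := hstep m x
      _ ≤ (∏ k ∈ Finset.range n, (1 + t k)) * 2 * p n x := by nlinarith

lemma diff_J (hmono : ∀ m n : ℕ, m ≤ n → ∀ x, p m x ≤ p n x) (s : ℕ → Pack 𝕜 X)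
    (hgood : ∀ j, GoodPack p j (s j)) (n : ℕ) :
    ∃ E, 0 ≤ E ∧ ∀ m x, n ≤ m →
      p n (Jc s (m+1) x - Jc s m x) ≤ (2:ℝ)⁻¹ ^ m * (E * p 0 x) := by
  obtain ⟨C, hC, hCb⟩ := growth_J p hmono s hgood 0
  refine ⟨C, hC, fun m x hm => ?_⟩
  have he : Jc s (m+1) x = Jc s m x + (s m).f (Jc s m x) • (s m).v := by
    show (s m).e (Jc s m x) = _
    exact ((hgood m).2.2.2.2) _
  have h1 : Jc s (m+1) x - Jc s m x = (s m).f (Jc s m x) • (s m).v := by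
    rw [he]; abel
  rw [h1, map_smul_eq_mul]
  have h2 : ‖(s m).f (Jc s m x)‖ ≤ (s m).c * p 0 (Jc s m x) := (hgood m).2.1 _
  have h3 : p 0 (Jc s m x) ≤ C * p 0 x := hCb m x
  have h4 : (s m).c * p n ((s m).v) ≤ (2:ℝ)⁻¹ ^ m / 16 := (hgood m).2.2.1 n hm
  have hc0 : 0 ≤ (s m).c := (hgood m).1
  have hv0 : 0 ≤ p n ((s m).v) := apply_nonneg _ _
  have hx0 : 0 ≤ p 0 x := apply_nonneg _ _
  have hfn : 0 ≤ ‖(s m).f (Jc s m x)‖ := norm_nonneg _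
  have hj0 : 0 ≤ p 0 (Jc s m x) := apply_nonneg _ _
  have hpw : (0:ℝ) < (2:ℝ)⁻¹ ^ m := by positivity
  calc ‖(s m).f (Jc s m x)‖ * p n ((s m).v)
      ≤ ((s m).c * p 0 (Jc s m x)) * p n ((s m).v) := mul_le_mul_of_nonneg_right h2 hv0
    _ = ((s m).c * p n ((s m).v)) * p 0 (Jc s m x) := by ring
    _ ≤ ((2:ℝ)⁻¹ ^ m / 16) * (C * p 0 x) := mul_le_mul h4 h3 hj0 (by positivity)
    _ ≤ (2:ℝ)⁻¹ ^ m * (C * p 0 x) := by nlinarith [mul_nonneg hC hx0]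

lemma diff_K (hmono : ∀ m n : ℕ, m ≤ n → ∀ x, p m x ≤ p n x) (s : ℕ → Pack 𝕜 X)
    (hgood : ∀ j, GoodPack p j (s j)) (n : ℕ) :
    ∃ E, 0 ≤ E ∧ ∀ m x, n ≤ m →
      p n ((Jc s (m+1)).symm x - (Jc s m).symm x) ≤ (2:ℝ)⁻¹ ^ m * (E * p 0 x) := by
  obtain ⟨C, hC, hCb⟩ := growth_K p hmono s hgood n
  refine ⟨C, hC, fun m x hm => ?_⟩
  have hrec : (Jc s (m+1)).symm x = (Jc s m).symm ((s m).e.symm x) := rfl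
  have hsymm := symm_apply_of_good (s m).f (s m).v (s m).e (hgood m).2.2.2.1
    ((hgood m).2.2.2.2) x
  set z : 𝕜 := -((1 + (s m).f ((s m).v))⁻¹ * (s m).f x) with hz
  have h1 : (Jc s (m+1)).symm x - (Jc s m).symm x = z • (Jc s m).symm ((s m).v) := by
    rw [hrec, hsymm, map_add, map_smul]
    abel
  rw [h1, map_smul_eq_mul]
  have hcoef : ‖z‖ ≤ 2 * ((s m).c * p 0 x) := by
    rw [hz, norm_neg, norm_mul]
    have ha := norm_inv_one_add_le ((s m).f ((s m).v)) (hgood m).2.2.2.1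
    have hb := (hgood m).2.1 x
    have hc : 0 ≤ ‖(s m).f x‖ := norm_nonneg _
    nlinarith
  have h3 : p n ((Jc s m).symm ((s m).v)) ≤ C * p n ((s m).v) := hCb m _
  have h4 : (s m).c * p n ((s m).v) ≤ (2:ℝ)⁻¹ ^ m / 16 := (hgood m).2.2.1 n hm
  have hc0 : 0 ≤ (s m).c := (hgood m).1
  have hv0 : 0 ≤ p n ((s m).v) := apply_nonneg _ _
  have hx0 : 0 ≤ p 0 x := apply_nonneg _ _
  have hz0 : 0 ≤ ‖z‖ := norm_nonneg _
  have hk0 : 0 ≤ p n ((Jc s m).symm ((s m).v)) := apply_nonneg _ _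
  have hpw : (0:ℝ) < (2:ℝ)⁻¹ ^ m := by positivity
  calc ‖z‖ * p n ((Jc s m).symm ((s m).v))
      ≤ (2 * ((s m).c * p 0 x)) * (C * p n ((s m).v)) :=
        mul_le_mul hcoef h3 hk0 (by positivity)
    _ = (2 * C * p 0 x) * ((s m).c * p n ((s m).v)) := by ring
    _ ≤ (2 * C * p 0 x) * ((2:ℝ)⁻¹ ^ m / 16) :=
        mul_le_mul_of_nonneg_left h4 (by positivity)
    _ ≤ (2:ℝ)⁻¹ ^ m * (C * p 0 x) := by nlinarith [mul_nonneg (mul_nonneg hC hx0) hpw.le]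


end Uniform

section Gauge
variable [Module ℝ X] [IsScalarTower ℝ 𝕜 X]
  [UniformSpace X] [IsUniformAddGroup X] [ContinuousSMul 𝕜 X]
  [LocallyConvexSpace ℝ X] [TopologicalSpace.MetrizableSpace X]



open scoped ComplexOrder in
lemma exists_seminorm_family (N : Seminorm 𝕜 X) (hNc : Continuous N) :
    ∃ p : ℕ → Seminorm 𝕜 X,
      (∀ n x, N x ≤ p n x) ∧
      (∀ m n, m ≤ n → ∀ x, p m x ≤ p n x) ∧
      (∀ n, Continuous (p n)) ∧
      (∀ U ∈ 𝓝 (0 : X), ∃ n ε, 0 < ε ∧ {x | p n x < ε} ⊆ U) := by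
  classical
  haveI : ContinuousSMul ℝ X := IsScalarTower.continuousSMul 𝕜
  haveI : SMulCommClass ℝ 𝕜 X := ⟨fun r k x => by
    rw [← smul_assoc, Algebra.smul_def, mul_comm, mul_smul, algebraMap_smul]⟩
  haveI : LocallyConvexSpace 𝕜 X := by
    rw [locallyConvexSpace_iff_exists_convex_subset_zero]
    intro U hU
    obtain ⟨S, hS, hSc, hSU⟩ := (locallyConvexSpace_iff_exists_convex_subset_zero ℝ X).mp ‹_› U hU
    refine ⟨S, hS, ?_, hSU⟩
    intro x hx y hy a b ha hb hab
    obtain ⟨ra, hra, rfl⟩ := RCLike.nonneg_iff_exists_ofReal.mp ha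
    obtain ⟨rb, hrb, rfl⟩ := RCLike.nonneg_iff_exists_ofReal.mp hb
    have h1 : ra + rb = 1 := by exact_mod_cast hab
    rw [← RCLike.real_smul_eq_coe_smul, ← RCLike.real_smul_eq_coe_smul]
    exact hSc hx hy hra hrb h1
  set q := gaugeSeminormFamily 𝕜 X with hqdef
  have hq : WithSeminorms q := with_gaugeSeminormFamily
  obtain ⟨U, hU⟩ := (𝓝 (0 : X)).exists_antitone_basis
  have hmem : ∀ i : ℕ, ∃ (s : Finset (AbsConvexOpenSets 𝕜 X)) (r : ℝ),
      0 < r ∧ (s.sup q).ball 0 r ⊆ U i := by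
    intro i
    have hUi : U i ∈ 𝓝 (0 : X) := hU.toHasBasis.mem_of_mem trivial
    obtain ⟨V, hV, hVU⟩ := hq.hasBasis.mem_iff.mp hUi
    obtain ⟨s, r, hr, rfl⟩ := q.basisSets_iff.mp hV
    exact ⟨s, r, hr, hVU⟩
  choose F ε hε hFU using hmem
  set G : ℕ → Finset (AbsConvexOpenSets 𝕜 X) := fun n => (Finset.range (n + 1)).sup F with hG
  set p : ℕ → Seminorm 𝕜 X := fun n => N ⊔ (G n).sup q with hp
  have hsup_mem : ∀ (s : Finset (AbsConvexOpenSets 𝕜 X)) (r : ℝ), 0 < r →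
      (s.sup q).ball 0 r ∈ 𝓝 (0 : X) :=
    fun s r hr => hq.hasBasis.mem_of_mem (q.basisSets_mem s hr)
  have hGc : ∀ n, Continuous ⇑((G n).sup q) := by
    intro n
    exact Seminorm.continuous (p := (G n).sup q) (r := 1) (hsup_mem (G n) 1 one_pos)
  refine ⟨p, ?_, ?_, ?_, ?_⟩
  · intro n x
    have : N ≤ p n := le_sup_left
    exact this x
  · intro m n hmn x
    have h1 : G m ⊆ G n := Finset.sup_mono (by
      intro i hi
      simp only [Finset.mem_range] at hi ⊢
      omega)
    have : p m ≤ p n := sup_le_sup_left (Finset.sup_mono h1) N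
    exact this x
  · intro n
    have : ⇑(p n) = ⇑N ⊔ ⇑((G n).sup q) := by
      rw [hp]; exact Seminorm.coe_sup _ _
    rw [this]
    exact hNc.sup (hGc n)
  · intro V hV
    obtain ⟨i, -, hiV⟩ := hU.toHasBasis.mem_iff.mp hV
    refine ⟨i, ε i, hε i, ?_⟩
    intro x hx
    apply hiV
    apply hFU i
    rw [Seminorm.mem_ball_zero]
    have h1 : F i ⊆ G i := Finset.le_sup (f := F) (by simp)
    have h2 : (F i).sup q ≤ (G i).sup q := Finset.sup_mono h1
    have h3 : (G i).sup q ≤ p i := le_sup_right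
    exact lt_of_le_of_lt (le_trans (h2 x) (h3 x)) hx


end Gauge

section Steps
variable [UniformSpace X] [IsUniformAddGroup X] [ContinuousSMul 𝕜 X] [T2Space X]

/-- The invariant maintained through the recursive construction. -/
def Inv (p : ℕ → Seminorm 𝕜 X) (A B : Set X) (ae be : ℕ → X) (k : ℕ)
    (s : ℕ → Pack 𝕜 X) : Prop :=
  (∀ j, j < k → GoodPack p j (s j) ∧ (s j).a ∈ A ∧ (s j).b ∈ B ∧
      Jc s (j+1) ((s j).a) = (s j).b ∧ ∀ i, i < j → (s j).f ((s i).b) = 0) ∧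
  (∀ j, 2*j < k → ∃ i, i < k ∧ (s i).a = ae j) ∧
  (∀ j, 2*j+1 < k → ∃ i, i < k ∧ (s i).b = be j)

lemma Jc_congr (s s' : ℕ → Pack 𝕜 X) (m : ℕ) (h : ∀ i, i < m → s' i = s i) :
    Jc s' m = Jc s m := by
  induction m with
  | zero => rfl
  | succ m ih =>
    show (Jc s' m).trans ((s' m).e) = (Jc s m).trans ((s m).e)
    rw [ih (fun i hi => h i (by omega)), h m (by omega)]

lemma persist (p : ℕ → Seminorm 𝕜 X) (A B : Set X) (ae be : ℕ → X) (k : ℕ)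
    (s : ℕ → Pack 𝕜 X) (h : Inv p A B ae be k s) :
    ∀ j, j < k → ∀ m, j < m → m ≤ k → Jc s m ((s j).a) = (s j).b := by
  intro j hj m
  induction m with
  | zero => omega
  | succ m ih =>
    intro hm1 hm2
    rcases Nat.lt_or_ge j m with h1 | h1
    · have hbm := ih h1 (by omega)
      show (s m).e (Jc s m ((s j).a)) = _
      rw [hbm]
      have hgood := (h.1 m (by omega)).1
      rw [hgood.2.2.2.2]
      rw [(h.1 m (by omega)).2.2.2.2 j h1]
      simp
    · have : m = j := by omega
      subst this
      exact (h.1 m (by omega)).2.2.2.1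

lemma li_set (A : Set X) (h : LinearIndependent 𝕜 ((↑) : A → X)) :
    ∀ sub : Set X, sub ⊆ A → ∀ x ∈ A, x ∉ sub → x ∉ Submodule.span 𝕜 sub := by
  intro sub hsub x hxA hxsub hxspan
  have h2 := h.notMem_span_image (s := ((↑) : A → X) ⁻¹' sub) (x := (⟨x, hxA⟩ : A))
    (by
      intro hc
      exact hxsub hc)
  apply h2
  have himg : ((↑) : A → X) '' (((↑) : A → X) ⁻¹' sub) = sub := by
    apply Set.eq_of_subset_of_subset
    · rintro _ ⟨w, hw, rfl⟩; exact hw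
    · intro z hz; exact ⟨⟨z, hsub hz⟩, hz, rfl⟩
  rw [himg]
  exact hxspan

lemma step_exists
    (hinf : ¬FiniteDimensional 𝕜 X)
    (N : Seminorm 𝕜 X) (hN0 : ∀ x : X, N x = 0 → x = 0)
    (p : ℕ → Seminorm 𝕜 X)
    (hNp : ∀ n x, N x ≤ p n x)
    (hmono : ∀ m n : ℕ, m ≤ n → ∀ x, p m x ≤ p n x)
    (hpc : ∀ n, Continuous ⇑(p n))
    (A B : Set X) (hAd : Dense A) (hBd : Dense B)
    (hAli : ∀ sub : Set X, sub ⊆ A → ∀ x ∈ A, x ∉ sub → x ∉ Submodule.span 𝕜 sub)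
    (hBli : ∀ sub : Set X, sub ⊆ B → ∀ x ∈ B, x ∉ sub → x ∉ Submodule.span 𝕜 sub)
    (ae be : ℕ → X) (hae : ∀ j, ae j ∈ A) (hbe : ∀ j, be j ∈ B)
    (k : ℕ) (s : ℕ → Pack 𝕜 X) (h : Inv p A B ae be k s) :
    ∃ d : Pack 𝕜 X, Inv p A B ae be (k+1) (Function.update s k d) := by
  classical
  set J : X ≃L[𝕜] X := Jc s k with hJ
  set S : Finset X := (Finset.range k).image (fun i => (s i).b) with hS
  set Sa : Set X := (fun i => (s i).a) '' (Set.Iio k) with hSa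
  have hSaA : Sa ⊆ A := by
    rintro _ ⟨i, hi, rfl⟩
    exact (h.1 i hi).2.1
  have hSB : (S : Set X) ⊆ B := by
    intro z hz
    simp only [hS, Finset.coe_image, Finset.coe_range, Set.mem_image, Set.mem_Iio] at hz
    obtain ⟨i, hi, rfl⟩ := hz
    exact (h.1 i hi).2.2.1
  have hJab : ∀ i, i < k → J ((s i).a) = (s i).b := by
    intro i hi
    exact persist p A B ae be k s h i hi k (by omega) (le_refl k)
  have hmap : Submodule.span 𝕜 (S : Set X) =
      Submodule.map (J : X →ₗ[𝕜] X) (Submodule.span 𝕜 Sa) := by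
    rw [Submodule.map_span]
    congr 1
    ext z
    simp only [hS, hSa, Finset.coe_image, Finset.coe_range, Set.mem_image, Set.mem_Iio,
      Set.image_image]
    constructor
    · rintro ⟨i, hi, rfl⟩
      exact ⟨i, hi, hJab i hi⟩
    · rintro ⟨i, hi, hz⟩
      exact ⟨i, hi, by rw [← hJab i hi]; exact hz⟩
  -- generic facts
  have hcov_a_old : ∀ (d : Pack 𝕜 X) j', 2*j' < k →
      ∃ i, i < k+1 ∧ ((Function.update s k d) i).a = ae j' := by
    intro d j' hj'
    obtain ⟨i, hi, hia⟩ := h.2.1 j' hj'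
    exact ⟨i, by omega, by rw [Function.update_of_ne (by omega)]; exact hia⟩
  have hcov_b_old : ∀ (d : Pack 𝕜 X) j', 2*j'+1 < k →
      ∃ i, i < k+1 ∧ ((Function.update s k d) i).b = be j' := by
    intro d j' hj'
    obtain ⟨i, hi, hib⟩ := h.2.2 j' hj'
    exact ⟨i, by omega, by rw [Function.update_of_ne (by omega)]; exact hib⟩
  have hold : ∀ (d : Pack 𝕜 X) j, j < k →
      GoodPack p j ((Function.update s k d) j) ∧ ((Function.update s k d) j).a ∈ A ∧
      ((Function.update s k d) j).b ∈ B ∧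
      Jc (Function.update s k d) (j+1) (((Function.update s k d) j).a) =
        ((Function.update s k d) j).b ∧
      ∀ i, i < j → ((Function.update s k d) j).f (((Function.update s k d) i).b) = 0 := by
    intro d j hj
    have he : (Function.update s k d) j = s j := Function.update_of_ne (by omega) _ _
    have hJc : Jc (Function.update s k d) (j+1) = Jc s (j+1) :=
      Jc_congr _ _ _ (fun i hi => Function.update_of_ne (by omega) _ _)
    rw [he, hJc]
    refine ⟨(h.1 j hj).1, (h.1 j hj).2.1, (h.1 j hj).2.2.1, (h.1 j hj).2.2.2.1, ?_⟩
    intro i hi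
    rw [Function.update_of_ne (by omega)]
    exact (h.1 j hj).2.2.2.2 i hi
  have hJck : ∀ (d : Pack 𝕜 X), Jc (Function.update s k d) k = Jc s k :=
    fun d => Jc_congr _ _ _ (fun i hi => Function.update_of_ne (by omega) _ _)
  have hJcsucc : ∀ (d : Pack 𝕜 X) (x : X),
      Jc (Function.update s k d) (k+1) x = d.e (J x) := by
    intro d x
    show ((Function.update s k d) k).e (Jc (Function.update s k d) k x) = _
    rw [hJck d, Function.update_self]
  -- the two kinds of steps
  have main : ∀ a0 b0 : X, ∀ (E : X ≃L[𝕜] X) (f : X →L[𝕜] 𝕜) (v : X) (c : ℝ),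
      a0 ∈ A → b0 ∈ B → GoodPack p k ⟨f, v, c, a0, b0, E⟩ → E (J a0) = b0 →
      (∀ i, i < k → f ((s i).b) = 0) →
      (∀ j, j < k+1 → GoodPack p j ((Function.update s k ⟨f, v, c, a0, b0, E⟩) j) ∧
        ((Function.update s k ⟨f, v, c, a0, b0, E⟩) j).a ∈ A ∧
        ((Function.update s k ⟨f, v, c, a0, b0, E⟩) j).b ∈ B ∧
        Jc (Function.update s k ⟨f, v, c, a0, b0, E⟩) (j+1)
          (((Function.update s k ⟨f, v, c, a0, b0, E⟩) j).a) =
          ((Function.update s k ⟨f, v, c, a0, b0, E⟩) j).b ∧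
        ∀ i, i < j → ((Function.update s k ⟨f, v, c, a0, b0, E⟩) j).f
          (((Function.update s k ⟨f, v, c, a0, b0, E⟩) i).b) = 0) := by
    intro a0 b0 E f v c ha0 hb0 hgood hEJ hfvanish j hj
    rcases Nat.lt_or_ge j k with hjk | hjk
    · exact hold _ j hjk
    · have hjeq : j = k := by omega
      subst hjeq
      rw [Function.update_self]
      refine ⟨hgood, ha0, hb0, ?_, ?_⟩
      · rw [hJcsucc]
        exact hEJ
      · intro i hi
        rw [Function.update_of_ne (by omega)]
        exact hfvanish i hi
  rcases Nat.even_or_odd k with ⟨j, hj⟩ | ⟨j, hj⟩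
  · -- even step: ensure `ae j` is matched
    by_cases hmatch : ∃ i, i < k ∧ (s i).a = ae j
    · -- trivial step
      obtain ⟨i0, hi0, hi0a⟩ := hmatch
      have hgood0 : GoodPack p k
          (⟨0, 0, 1, (s i0).a, (s i0).b, ContinuousLinearEquiv.refl 𝕜 X⟩ : Pack 𝕜 X) := by
        refine ⟨zero_le_one, ?_, ?_, ?_, ?_⟩
        · intro u
          have := apply_nonneg (p 0) u
          simp only [ContinuousLinearMap.zero_apply, norm_zero]
          linarith
        · intro n hn
          simp only [map_zero, mul_zero]
          positivity
        · simp
        · intro x; simp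
      refine ⟨_, main _ _ _ _ _ _ (h.1 i0 hi0).2.1 (h.1 i0 hi0).2.2.1 hgood0 ?_ ?_, ?_, ?_⟩
      · show (ContinuousLinearEquiv.refl 𝕜 X) (J ((s i0).a)) = (s i0).b
        simp [hJab i0 hi0]
      · intro i hi; simp
      · intro j' hj'
        rcases Nat.lt_or_ge (2*j') k with hlt | hge
        · exact hcov_a_old _ j' hlt
        · have hj'j : j' = j := by omega
          subst hj'j
          exact ⟨i0, by omega, by rw [Function.update_of_ne (by omega)]; exact hi0a⟩
      · intro j' hj'
        exact hcov_b_old _ j' (by omega)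
    · -- genuine forward step
      push_neg at hmatch
      set a0 := ae j with ha0def
      have ha0A : a0 ∈ A := hae j
      have ha0Sa : a0 ∉ Sa := by
        rintro ⟨i, hi, hia⟩
        exact hmatch i hi hia
      have hxspan : J a0 ∉ Submodule.span 𝕜 (S : Set X) := by
        rw [hmap]
        intro hc
        obtain ⟨y, hy, hyx⟩ := Submodule.mem_map.mp hc
        have hya : y = a0 := J.injective hyx
        subst hya
        exact hAli Sa hSaA a0 ha0A ha0Sa hy
      obtain ⟨f₀, c₀, hc₀, hfb, hfx, hfS⟩ := exists_functional N hN0 S (J a0) hxspan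
      have hc₀0 : (0:ℝ) < c₀ := by linarith
      have hfb' : ∀ u, ‖f₀ u‖ ≤ c₀ * p 0 u := fun u =>
        le_trans (hfb u) (mul_le_mul_of_nonneg_left (hNp 0 u) (by linarith))
      have hfcont : Continuous f₀ := cont_of_dominated (p 0) (hpc 0) f₀ c₀ hfb'
      set F : X →L[𝕜] 𝕜 := ⟨f₀, hfcont⟩ with hF
      set δ : ℝ := ((2:ℝ)⁻¹ ^ k / 16) / c₀ with hδ
      have hδ0 : 0 < δ := by positivity
      have hUopen : IsOpen {z : X | p k (z - J a0) < δ} :=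
        isOpen_lt ((hpc k).comp (continuous_id.sub continuous_const)) continuous_const
      have hUne : J a0 ∈ {z : X | p k (z - J a0) < δ} := by
        simp only [Set.mem_setOf_eq, sub_self, map_zero]
        exact hδ0
      obtain ⟨b, hbB, hbU⟩ := hBd.exists_mem_open hUopen ⟨_, hUne⟩
      set v : X := b - J a0 with hv
      have hvk : p k v < δ := hbU
      have hbound : ∀ n, n ≤ k → c₀ * p n v ≤ (2:ℝ)⁻¹ ^ k / 16 := by
        intro n hn
        have h1 : p n v ≤ p k v := hmono n k hn v
        calc c₀ * p n v ≤ c₀ * δ := by nlinarith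
          _ = (2:ℝ)⁻¹ ^ k / 16 := by
              rw [hδ, mul_div_cancel₀ _ (ne_of_gt hc₀0)]
      have hFveq : F v = f₀ v := rfl
      have hFv : ‖F v‖ ≤ 1/2 := by
        rw [hFveq]
        have h1 := hfb' v
        have h2 := hbound 0 (Nat.zero_le k)
        have h3 : (2:ℝ)⁻¹ ^ k ≤ 1 := pow_le_one₀ (by norm_num) (by norm_num)
        linarith
      have hFv1 : ‖F v‖ < 1 := lt_of_le_of_lt hFv (by norm_num)
      have hgoodF : GoodPack p k (⟨F, v, c₀, a0, b, rankOne F v⟩ : Pack 𝕜 X) := by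
        refine ⟨le_of_lt hc₀0, hfb', hbound, hFv, fun x => rankOne_apply F v hFv1 x⟩
      refine ⟨_, main _ _ _ _ _ _ ha0A hbB hgoodF ?_ ?_, ?_, ?_⟩
      · show rankOne F v (J a0) = b
        rw [rankOne_apply F v hFv1]
        have : F (J a0) = 1 := hfx
        rw [this, one_smul, hv]
        abel
      · intro i hi
        show f₀ ((s i).b) = 0
        exact hfS _ (Finset.mem_image_of_mem _ (Finset.mem_range.2 hi))
      · intro j' hj'
        rcases Nat.lt_or_ge (2*j') k with hlt | hge
        · exact hcov_a_old _ j' hlt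
        · have hj'j : j' = j := by omega
          subst hj'j
          refine ⟨k, by omega, ?_⟩
          rw [Function.update_self]
      · intro j' hj'
        exact hcov_b_old _ j' (by omega)
  · -- odd step: ensure `be j` is matched
    by_cases hmatch : ∃ i, i < k ∧ (s i).b = be j
    · obtain ⟨i0, hi0, hi0b⟩ := hmatch
      have hgood0 : GoodPack p k
          (⟨0, 0, 1, (s i0).a, (s i0).b, ContinuousLinearEquiv.refl 𝕜 X⟩ : Pack 𝕜 X) := by
        refine ⟨zero_le_one, ?_, ?_, ?_, ?_⟩
        · intro u
          have := apply_nonneg (p 0) u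
          simp only [ContinuousLinearMap.zero_apply, norm_zero]
          linarith
        · intro n hn
          simp only [map_zero, mul_zero]
          positivity
        · simp
        · intro x; simp
      refine ⟨_, main _ _ _ _ _ _ (h.1 i0 hi0).2.1 (h.1 i0 hi0).2.2.1 hgood0 ?_ ?_, ?_, ?_⟩
      · show (ContinuousLinearEquiv.refl 𝕜 X) (J ((s i0).a)) = (s i0).b
        simp [hJab i0 hi0]
      · intro i hi; simp
      · intro j' hj'
        exact hcov_a_old _ j' (by omega)
      · intro j' hj'
        rcases Nat.lt_or_ge (2*j'+1) k with hlt | hge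
        · exact hcov_b_old _ j' hlt
        · have hj'j : j' = j := by omega
          subst hj'j
          exact ⟨i0, by omega, by rw [Function.update_of_ne (by omega)]; exact hi0b⟩
    · -- genuine backward step
      push_neg at hmatch
      set b0 := be j with hb0def
      have hb0B : b0 ∈ B := hbe j
      have hb0S : b0 ∉ (S : Set X) := by
        intro hc
        simp only [hS, Finset.coe_image, Finset.coe_range, Set.mem_image, Set.mem_Iio] at hc
        obtain ⟨i, hi, hib⟩ := hc
        exact hmatch i hi hib
      have hspan : b0 ∉ Submodule.span 𝕜 (S : Set X) :=
        hBli (S : Set X) hSB b0 hb0B hb0S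
      obtain ⟨f₀, c₀, hc₀, hfb, hfx, hfS⟩ := exists_functional N hN0 S b0 hspan
      have hc₀0 : (0:ℝ) < c₀ := by linarith
      have hfb' : ∀ u, ‖f₀ u‖ ≤ c₀ * p 0 u := fun u =>
        le_trans (hfb u) (mul_le_mul_of_nonneg_left (hNp 0 u) (by linarith))
      have hfcont : Continuous f₀ := cont_of_dominated (p 0) (hpc 0) f₀ c₀ hfb'
      set F : X →L[𝕜] 𝕜 := ⟨f₀, hfcont⟩ with hF
      set δ : ℝ := ((2:ℝ)⁻¹ ^ k / 32) / c₀ with hδ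
      have hδ0 : 0 < δ := by positivity
      have hU'open : IsOpen {z : X | p k (z - b0) < δ} :=
        isOpen_lt ((hpc k).comp (continuous_id.sub continuous_const)) continuous_const
      have hUopen : IsOpen ((J : X → X) ⁻¹' {z : X | p k (z - b0) < δ}) :=
        hU'open.preimage J.continuous
      have hUne : J.symm b0 ∈ (J : X → X) ⁻¹' {z : X | p k (z - b0) < δ} := by
        simp only [Set.mem_preimage, Set.mem_setOf_eq, ContinuousLinearEquiv.apply_symm_apply,
          sub_self, map_zero]
        exact hδ0
      haveI : FiniteDimensional 𝕜 (Submodule.span 𝕜 (S : Set X)) :=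
        FiniteDimensional.span_of_finite 𝕜 S.finite_toSet
      set W : Submodule 𝕜 X :=
        Submodule.map (J.symm : X →ₗ[𝕜] X) (Submodule.span 𝕜 (S : Set X)) with hW
      haveI : FiniteDimensional 𝕜 W := Module.Finite.map _ _
      obtain ⟨a, haA, haU, haW⟩ := dense_avoid hinf hAd hUopen ⟨_, hUne⟩ W
      set w : X := J a - b0 with hw
      have hwk : p k w < δ := haU
      have hbound : ∀ n, n ≤ k → c₀ * p n w ≤ (2:ℝ)⁻¹ ^ k / 32 := by
        intro n hn
        have h1 : p n w ≤ p k w := hmono n k hn w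
        calc c₀ * p n w ≤ c₀ * δ := by nlinarith
          _ = (2:ℝ)⁻¹ ^ k / 32 := by
              rw [hδ, mul_div_cancel₀ _ (ne_of_gt hc₀0)]
      have hFweq : F w = f₀ w := rfl
      have hFw : ‖F w‖ ≤ 1/2 := by
        rw [hFweq]
        have h1 := hfb' w
        have h2 := hbound 0 (Nat.zero_le k)
        have h3 : (2:ℝ)⁻¹ ^ k ≤ 1 := pow_le_one₀ (by norm_num) (by norm_num)
        linarith
      have hFw1 : ‖F w‖ < 1 := lt_of_le_of_lt hFw (by norm_num)
      set zc : 𝕜 := -((1 + F w)⁻¹) with hzc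
      set fd : X →L[𝕜] 𝕜 := zc • F with hfd
      have hzcn : ‖zc‖ ≤ 2 := by
        rw [hzc, norm_neg]
        exact norm_inv_one_add_le _ hFw
      have hfdapp : ∀ u, fd u = -((1 + F w)⁻¹ * F u) := by
        intro u
        rw [hfd]
        simp only [ContinuousLinearMap.smul_apply, smul_eq_mul, hzc, neg_mul]
      have hfdb : ∀ u, ‖fd u‖ ≤ (2 * c₀) * p 0 u := by
        intro u
        have h1 : ‖fd u‖ = ‖zc‖ * ‖F u‖ := by
          rw [hfd]; simp [norm_smul]
        rw [h1]
        have h2 : ‖F u‖ ≤ c₀ * p 0 u := hfb' u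
        have h3 : 0 ≤ ‖F u‖ := norm_nonneg _
        nlinarith
      have hbound2 : ∀ n, n ≤ k → (2 * c₀) * p n w ≤ (2:ℝ)⁻¹ ^ k / 16 := by
        intro n hn
        have := hbound n hn
        nlinarith
      have hfdw : ‖fd w‖ ≤ 1/2 := by
        have h1 := hfdb w
        have h2 := hbound2 0 (Nat.zero_le k)
        have h3 : (2:ℝ)⁻¹ ^ k ≤ 1 := pow_le_one₀ (by norm_num) (by norm_num)
        linarith
      set E : X ≃L[𝕜] X := (rankOne F w).symm with hE
      have hEx : ∀ x, E x = x + fd x • w := by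
        intro x
        rw [hE, rankOne_symm_apply F w hFw1 x, hfdapp x]
      have hgoodF : GoodPack p k (⟨fd, w, 2*c₀, a, b0, E⟩ : Pack 𝕜 X) :=
        ⟨by show (0:ℝ) ≤ 2*c₀; linarith, hfdb, hbound2, hfdw, hEx⟩
      have hJaS0 : J a = rankOne F w b0 := by
        rw [rankOne_apply F w hFw1]
        have : F b0 = 1 := hfx
        rw [this, one_smul, hw]
        abel
      refine ⟨_, main _ _ _ _ _ _ haA hb0B hgoodF ?_ ?_, ?_, ?_⟩
      · show E (J a) = b0
        rw [hE, hJaS0]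
        exact (rankOne F w).symm_apply_apply b0
      · intro i hi
        rw [hfdapp]
        have : F ((s i).b) = f₀ ((s i).b) := rfl
        rw [this, hfS _ (Finset.mem_image_of_mem _ (Finset.mem_range.2 hi))]
        simp
      · intro j' hj'
        exact hcov_a_old _ j' (by omega)
      · intro j' hj'
        rcases Nat.lt_or_ge (2*j'+1) k with hlt | hge
        · exact hcov_b_old _ j' hlt
        · have hj'j : j' = j := by omega
          subst hj'j
          refine ⟨k, by omega, ?_⟩
          rw [Function.update_self]


end Steps

end GS

/-- A separable infinite-dimensional Fréchet space admitting a continuous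
norm is a G-space: `GL(X)` acts transitively on the countable dense linearly
independent subsets of `X`. -/
theorem gspace_of_continuous_norm
    (𝕜 : Type*) [RCLike 𝕜] (X : Type*) [AddCommGroup X] [Module 𝕜 X]
    [Module ℝ X] [IsScalarTower ℝ 𝕜 X]
    -- X is a Fréchet space: a complete metrizable locally convex TVS
    [UniformSpace X] [IsUniformAddGroup X] [ContinuousSMul 𝕜 X]
    [LocallyConvexSpace ℝ X] [CompleteSpace X] [TopologicalSpace.MetrizableSpace X]
    -- separable and infinite dimensional
    [TopologicalSpace.SeparableSpace X] (hinf : ¬ FiniteDimensional 𝕜 X)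
    -- X possesses a continuous norm
    (hnorm : ∃ N : Seminorm 𝕜 X, Continuous N ∧ ∀ x : X, N x = 0 → x = 0)
    -- A and B are countable (infinite) dense linearly independent subsets of X
    (A B : Set X)
    (hAc : A.Countable) (hAi : A.Infinite) (hAd : Dense A)
    (hAli : LinearIndependent 𝕜 ((↑) : A → X))
    (hBc : B.Countable) (hBi : B.Infinite) (hBd : Dense B)
    (hBli : LinearIndependent 𝕜 ((↑) : B → X)) :
    ∃ J : X ≃L[𝕜] X, J '' A = B := by
  classical
  obtain ⟨N, hNc, hN0⟩ := hnorm
  obtain ⟨p, hNp, hmono, hpc, hbasis⟩ := GS.exists_seminorm_family N hNc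
  -- enumerations of A and B
  haveI : Countable A := hAc.to_subtype
  haveI : Infinite A := hAi.to_subtype
  haveI : Countable B := hBc.to_subtype
  haveI : Infinite B := hBi.to_subtype
  obtain ⟨dA⟩ := nonempty_denumerable (↥A)
  obtain ⟨dB⟩ := nonempty_denumerable (↥B)
  set eA : ℕ ≃ ↥A := (Denumerable.eqv ↥A).symm with heA
  set eB : ℕ ≃ ↥B := (Denumerable.eqv ↥B).symm with heB
  set ae : ℕ → X := fun n => (eA n : X) with hae_def
  set be : ℕ → X := fun n => (eB n : X) with hbe_def
  have hae : ∀ j, ae j ∈ A := fun j => (eA j).2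
  have hbe : ∀ j, be j ∈ B := fun j => (eB j).2
  have haesurj : ∀ x ∈ A, ∃ j, ae j = x := by
    intro x hx
    exact ⟨eA.symm ⟨x, hx⟩, by simp [hae_def]⟩
  have hbesurj : ∀ y ∈ B, ∃ j, be j = y := by
    intro y hy
    exact ⟨eB.symm ⟨y, hy⟩, by simp [hbe_def]⟩
  have hAli' := GS.li_set A hAli
  have hBli' := GS.li_set B hBli
  -- the recursive construction
  have Hex : ∀ k (s : ℕ → GS.Pack 𝕜 X), GS.Inv p A B ae be k s →
      ∃ d, GS.Inv p A B ae be (k+1) (Function.update s k d) :=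
    fun k s h => GS.step_exists hinf N hN0 p hNp hmono hpc A B hAd hBd hAli' hBli'
      ae be hae hbe k s h
  set stf : (k : ℕ) → { s : ℕ → GS.Pack 𝕜 X // GS.Inv p A B ae be k s } := fun k =>
    Nat.rec
      ⟨fun _ => (⟨0, 0, 0, 0, 0, ContinuousLinearEquiv.refl 𝕜 X⟩ : GS.Pack 𝕜 X),
        ⟨fun j hj => absurd hj (Nat.not_lt_zero j),
         fun j hj => absurd hj (Nat.not_lt_zero _),
         fun j hj => absurd hj (Nat.not_lt_zero _)⟩⟩
      (fun k ih => ⟨Function.update ih.1 k (Hex k ih.1 ih.2).choose,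
        (Hex k ih.1 ih.2).choose_spec⟩) k
    with hstf
  set F : ℕ → GS.Pack 𝕜 X := fun j => (stf (j+1)).1 j with hFdef
  have hsucc : ∀ k, (stf (k+1)).1 =
      Function.update (stf k).1 k ((Hex k (stf k).1 (stf k).2).choose) := fun k => rfl
  have hagree : ∀ i k, i < k → (stf k).1 i = F i := by
    intro i k hik
    induction k with
    | zero => omega
    | succ k ih =>
      rcases Nat.lt_or_ge i k with h1 | h1
      · rw [hsucc k, Function.update_of_ne (by omega)]
        exact ih h1
      · have : i = k := by omega
        subst this
        rfl
  have hgoodF : ∀ j, GS.GoodPack p j (F j) := fun j => ((stf (j+1)).2.1 j (by omega)).1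
  have haF : ∀ j, (F j).a ∈ A := fun j => ((stf (j+1)).2.1 j (by omega)).2.1
  have hbF : ∀ j, (F j).b ∈ B := fun j => ((stf (j+1)).2.1 j (by omega)).2.2.1
  have hJcF : ∀ m, GS.Jc F m = GS.Jc (stf m).1 m :=
    fun m => GS.Jc_congr (stf m).1 F m (fun i hi => (hagree i m hi).symm)
  have hpers : ∀ j m, j < m → GS.Jc F m ((F j).a) = (F j).b := by
    intro j m hjm
    have h1 := GS.persist p A B ae be m (stf m).1 (stf m).2 j hjm m hjm (le_refl m)
    rw [hagree j m hjm] at h1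
    rw [hJcF m]
    exact h1
  -- the two operator sequences
  set T : ℕ → X →ₗ[𝕜] X := fun m => ((GS.Jc F m).toLinearEquiv : X ≃ₗ[𝕜] X).toLinearMap
    with hT
  set T' : ℕ → X →ₗ[𝕜] X :=
    fun m => ((GS.Jc F m).symm.toLinearEquiv : X ≃ₗ[𝕜] X).toLinearMap with hT'
  have hTapp : ∀ m x, T m x = GS.Jc F m x := fun _ _ => rfl
  have hT'app : ∀ m x, T' m x = (GS.Jc F m).symm x := fun _ _ => rfl
  have hdiffJ : ∀ n, ∃ E, 0 ≤ E ∧ ∀ m x, n ≤ m →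
      p n (T (m+1) x - T m x) ≤ (2:ℝ)⁻¹ ^ m * (E * p 0 x) := by
    intro n
    obtain ⟨E, h1, h2⟩ := GS.diff_J p hmono F hgoodF n
    exact ⟨E, h1, fun m x hm => h2 m x hm⟩
  have hdiffK : ∀ n, ∃ E, 0 ≤ E ∧ ∀ m x, n ≤ m →
      p n (T' (m+1) x - T' m x) ≤ (2:ℝ)⁻¹ ^ m * (E * p 0 x) := by
    intro n
    obtain ⟨E, h1, h2⟩ := GS.diff_K p hmono F hgoodF n
    exact ⟨E, h1, fun m x hm => h2 m x hm⟩
  obtain ⟨L, hL⟩ := GS.exists_limit p hbasis hpc T hdiffJ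
  obtain ⟨M, hM⟩ := GS.exists_limit p hbasis hpc T' hdiffK
  have hgJ := GS.growth_J p hmono F hgoodF
  have hgK := GS.growth_K p hmono F hgoodF
  -- continuity of the limits
  have hlimb : ∀ (Lf : X →ₗ[𝕜] X) (Tf : ℕ → X →ₗ[𝕜] X),
      (∀ n, ∃ E, 0 ≤ E ∧ ∀ m x, n ≤ m →
        p n (Lf x - Tf m x) ≤ (2:ℝ)⁻¹ ^ m * (E * p 0 x)) →
      (∀ n, ∃ C, 0 ≤ C ∧ ∀ m x, p n (Tf m x) ≤ C * p n x) →
      ∀ n, ∃ C, 0 ≤ C ∧ ∀ x, p n (Lf x) ≤ C * p n x := by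
    intro Lf Tf hLf hTf n
    obtain ⟨E, hE0, hEb⟩ := hLf n
    obtain ⟨C, hC0, hCb⟩ := hTf n
    refine ⟨C + E, by positivity, fun x => ?_⟩
    have h1 : p n (Lf x) ≤ p n (Tf n x) + p n (Lf x - Tf n x) := by
      have h2 : Lf x = Tf n x + (Lf x - Tf n x) := by abel
      calc p n (Lf x) = p n (Tf n x + (Lf x - Tf n x)) := by rw [← h2]
        _ ≤ _ := map_add_le_add _ _ _
    have h2 := hEb n x (le_refl n)
    have h3 : (2:ℝ)⁻¹ ^ n ≤ 1 := pow_le_one₀ (by norm_num) (by norm_num)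
    have h4 := hCb n x
    have h5 : p 0 x ≤ p n x := hmono 0 n (Nat.zero_le n) x
    have h6 : 0 ≤ E * p 0 x := mul_nonneg hE0 (apply_nonneg _ _)
    have h7 : (2:ℝ)⁻¹ ^ n * (E * p 0 x) ≤ E * p n x := by nlinarith
    linarith
  have hgJ' : ∀ n, ∃ C, 0 ≤ C ∧ ∀ m x, p n (T m x) ≤ C * p n x := by
    intro n; obtain ⟨C, h1, h2⟩ := hgJ n; exact ⟨C, h1, fun m x => h2 m x⟩
  have hgK' : ∀ n, ∃ C, 0 ≤ C ∧ ∀ m x, p n (T' m x) ≤ C * p n x := by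
    intro n; obtain ⟨C, h1, h2⟩ := hgK n; exact ⟨C, h1, fun m x => h2 m x⟩
  have hLc : Continuous L := GS.continuous_of_bounds p hbasis hpc L (hlimb L T hL hgJ')
  have hMc : Continuous M := GS.continuous_of_bounds p hbasis hpc M (hlimb M T' hM hgK')
  -- vanishing helper
  have hvanish : ∀ z : X, (∀ n, p n z = 0) → z = 0 := by
    intro z hz
    apply hN0
    have h1 := hNp 0 z
    have h2 := apply_nonneg N z
    rw [hz 0] at h1
    linarith
  -- M ∘ L = id
  have hML : ∀ x, M (L x) = x := by
    intro x
    have hzero : ∀ n, p n (M (L x) - x) = 0 := by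
      intro n
      obtain ⟨EK, hEK0, hEKb⟩ := hM n
      obtain ⟨EJ, hEJ0, hEJb⟩ := hL n
      obtain ⟨CK, hCK0, hCKb⟩ := hgK n
      apply GS.eq_zero_of_tail _ (EK * p 0 (L x) + CK * (EJ * p 0 x)) n (apply_nonneg _ _)
      intro m hm
      have hTT : T' m (T m x) = x := (GS.Jc F m).symm_apply_apply x
      have key2 : T' m (L x) - x = T' m (L x - T m x) := by
        rw [map_sub, hTT]
      have htri : p n (M (L x) - x) ≤
          p n (M (L x) - T' m (L x)) + p n (T' m (L x) - x) := by
        have h2 : M (L x) - x = (M (L x) - T' m (L x)) + (T' m (L x) - x) := by abel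
        rw [h2]; exact map_add_le_add _ _ _
      have hA' := hEKb m (L x) hm
      have hB' : p n (T' m (L x) - x) ≤ CK * p n (L x - T m x) := by
        rw [key2]; exact hCKb m _
      have hC' := hEJb m x hm
      have hD' : CK * p n (L x - T m x) ≤ CK * ((2:ℝ)⁻¹ ^ m * (EJ * p 0 x)) :=
        mul_le_mul_of_nonneg_left hC' hCK0
      calc p n (M (L x) - x) ≤ _ := htri
        _ ≤ (2:ℝ)⁻¹ ^ m * (EK * p 0 (L x)) + CK * ((2:ℝ)⁻¹ ^ m * (EJ * p 0 x)) := by linarith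
        _ = (2:ℝ)⁻¹ ^ m * (EK * p 0 (L x) + CK * (EJ * p 0 x)) := by ring
    have := hvanish _ hzero
    exact sub_eq_zero.mp this
  -- L ∘ M = id
  have hLM : ∀ x, L (M x) = x := by
    intro x
    have hzero : ∀ n, p n (L (M x) - x) = 0 := by
      intro n
      obtain ⟨EK, hEK0, hEKb⟩ := hM n
      obtain ⟨EJ, hEJ0, hEJb⟩ := hL n
      obtain ⟨CJ, hCJ0, hCJb⟩ := hgJ n
      apply GS.eq_zero_of_tail _ (EJ * p 0 (M x) + CJ * (EK * p 0 x)) n (apply_nonneg _ _)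
      intro m hm
      have hTT : T m (T' m x) = x := (GS.Jc F m).apply_symm_apply x
      have key2 : T m (M x) - x = T m (M x - T' m x) := by
        rw [map_sub, hTT]
      have htri : p n (L (M x) - x) ≤
          p n (L (M x) - T m (M x)) + p n (T m (M x) - x) := by
        have h2 : L (M x) - x = (L (M x) - T m (M x)) + (T m (M x) - x) := by abel
        rw [h2]; exact map_add_le_add _ _ _
      have hA' := hEJb m (M x) hm
      have hB' : p n (T m (M x) - x) ≤ CJ * p n (M x - T' m x) := by
        rw [key2]; exact hCJb m _
      have hC' := hEKb m x hm
      have hD' : CJ * p n (M x - T' m x) ≤ CJ * ((2:ℝ)⁻¹ ^ m * (EK * p 0 x)) :=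
        mul_le_mul_of_nonneg_left hC' hCJ0
      calc p n (L (M x) - x) ≤ _ := htri
        _ ≤ (2:ℝ)⁻¹ ^ m * (EJ * p 0 (M x)) + CJ * ((2:ℝ)⁻¹ ^ m * (EK * p 0 x)) := by linarith
        _ = (2:ℝ)⁻¹ ^ m * (EJ * p 0 (M x) + CJ * (EK * p 0 x)) := by ring
    have := hvanish _ hzero
    exact sub_eq_zero.mp this
  -- images of the matched points
  have hLab : ∀ j, L ((F j).a) = (F j).b := by
    intro j
    have hzero : ∀ n, p n (L ((F j).a) - (F j).b) = 0 := by
      intro n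
      obtain ⟨EJ, hEJ0, hEJb⟩ := hL n
      apply GS.eq_zero_of_tail _ (EJ * p 0 ((F j).a)) (max n (j+1)) (apply_nonneg _ _)
      intro m hm
      have h1 : T m ((F j).a) = (F j).b := hpers j m (by omega)
      calc p n (L ((F j).a) - (F j).b) = p n (L ((F j).a) - T m ((F j).a)) := by rw [h1]
        _ ≤ (2:ℝ)⁻¹ ^ m * (EJ * p 0 ((F j).a)) := hEJb m _ (le_trans (le_max_left _ _) hm)
    have := hvanish _ hzero
    exact sub_eq_zero.mp this
  -- coverage
  have hcovA : ∀ x ∈ A, ∃ j, (F j).a = x := by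
    intro x hx
    obtain ⟨j, hj⟩ := haesurj x hx
    obtain ⟨i, hik, hia⟩ := (stf (2*j+1)).2.2.1 j (by omega)
    refine ⟨i, ?_⟩
    rw [← hagree i (2*j+1) hik, hia, hj]
  have hcovB : ∀ y ∈ B, ∃ j, (F j).b = y := by
    intro y hy
    obtain ⟨j, hj⟩ := hbesurj y hy
    obtain ⟨i, hik, hib⟩ := (stf (2*j+2)).2.2.2 j (by omega)
    refine ⟨i, ?_⟩
    rw [← hagree i (2*j+2) hik, hib, hj]
  -- assemble the equivalence
  have hcomp1 : L.comp M = LinearMap.id := LinearMap.ext fun x => hLM x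
  have hcomp2 : M.comp L = LinearMap.id := LinearMap.ext fun x => hML x
  set e : X ≃ₗ[𝕜] X := LinearEquiv.ofLinear L M hcomp1 hcomp2 with he
  set Jfin : X ≃L[𝕜] X :=
    { e with continuous_toFun := hLc, continuous_invFun := hMc } with hJfin
  have hJfinapp : ∀ x, Jfin x = L x := fun x => rfl
  refine ⟨Jfin, ?_⟩
  apply Set.eq_of_subset_of_subset
  · rintro _ ⟨x, hxA, rfl⟩
    obtain ⟨j, rfl⟩ := hcovA x hxA
    rw [hJfinapp, hLab j]
    exact hbF j
  · intro y hyB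
    obtain ⟨j, rfl⟩ := hcovB y hyB
    exact ⟨(F j).a, haF j, by rw [hJfinapp, hLab j]⟩
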